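/- Let B ≥ 1, η ∈ [0,1], ρ ≥ 1, and define q_i = 1 - (1 + (B-1)η)/(B·i/2 - (B-1)(ρ + 1 - η)) for each integer i. Then for all integers t, n with 2ρ + 2 ≤ t ≤ n, the product of q_i for i from t+1 to n is at least ((t - 2ρ - 2)/n)^{2(η + (1-η)/B)}. -/

import Mathlib

open Real

/-- Bernoulli-type bound for exponent `e ≥ 1`. -/
lemma aux_bern_ge_one (x e : ℝ) (hx : 0 < x) (he : 1 ≤ e) :
    (x / (x + 1)) ^ e ≤ x / (x + e) := by
  have he0 : (0:ℝ) < e := lt_of_lt_of_le one_pos he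
  have hx1 : (0:ℝ) < x + 1 := by linarith
  have hxe : (0:ℝ) < x + e := by linarith
  have h1 : (x + e) / x ≤ ((x + 1) / x) ^ e := by
    have hs : (-1:ℝ) ≤ 1 / x := by
      have : (0:ℝ) ≤ 1 / x := by positivity
      linarith
    have := one_add_mul_self_le_rpow_one_add hs he
    have e1 : (x + 1) / x = 1 + 1 / x := by field_simp
    have e2 : (x + e) / x = 1 + e * (1 / x) := by field_simp
    rw [e1, e2]; exact this
  have hpos : (0:ℝ) < (x + e) / x := by positivity
  have h2 : (((x + 1) / x) ^ e)⁻¹ ≤ ((x + e) / x)⁻¹ :=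
    inv_anti₀ hpos h1
  have e3 : (x / (x + 1)) ^ e = (((x + 1) / x) ^ e)⁻¹ := by
    rw [← Real.inv_rpow (by positivity), inv_div]
  have e4 : ((x + e) / x)⁻¹ = x / (x + e) := by rw [inv_div]
  rw [e3, ← e4]; exact h2

/-- Bernoulli-type bound for exponent `e ≤ 1`. -/
lemma aux_bern_le_one (x e : ℝ) (hx : 1 ≤ x) (he0 : 0 ≤ e) (he1 : e ≤ 1) :
    ((x + e - 1) / (x + e)) ^ e ≤ x / (x + e) := by
  have hxe : (0:ℝ) < x + e := by linarith
  have hs : (-1:ℝ) ≤ -(1 / (x + e)) := by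
    have : 1 / (x + e) ≤ 1 := by
      rw [div_le_one hxe]; linarith
    linarith
  have := rpow_one_add_le_one_add_mul_self hs he0 he1
  have l : 1 + -(1 / (x + e)) = (x + e - 1) / (x + e) := by field_simp; ring
  have r : 1 + e * -(1 / (x + e)) = x / (x + e) := by field_simp; ring
  rw [l, r] at this
  exact this

/-- Telescoping lower bound for products of terms bounded below by
`((i - a)/(i + 1 - a))^e`. -/
lemma aux_telescope (q : ℤ → ℝ) (e a : ℝ) (he : 0 ≤ e) (t : ℤ)
    (hta : (0:ℝ) < (t : ℝ) + 1 - a)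
    (hterm : ∀ i : ℤ, t + 1 ≤ i → (((i:ℝ) - a) / ((i:ℝ) + 1 - a)) ^ e ≤ q i) :
    ∀ n : ℤ, t ≤ n →
      (((t:ℝ) + 1 - a) / ((n:ℝ) + 1 - a)) ^ e ≤ ∏ i ∈ Finset.Icc (t + 1) n, q i := by
  refine Int.le_induction ?_ ?_
  · rw [Finset.Icc_eq_empty (by omega), Finset.prod_empty,
      div_self (ne_of_gt hta), Real.one_rpow]
  · intro n hn ih
    have hcast : (t:ℝ) ≤ (n:ℝ) := by exact_mod_cast hn
    have h1 : (0:ℝ) < (n:ℝ) + 1 - a := by linarith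
    have h2 : (0:ℝ) < (n:ℝ) + 2 - a := by linarith
    have hins : Finset.Icc (t + 1) (n + 1) = insert (n + 1) (Finset.Icc (t + 1) n) := by
      ext x; simp only [Finset.mem_Icc, Finset.mem_insert]; omega
    rw [hins, Finset.prod_insert (by simp only [Finset.mem_Icc]; omega)]
    have hq1 : (((n:ℝ) + 1 - a) / ((n:ℝ) + 2 - a)) ^ e ≤ q (n + 1) := by
      have := hterm (n + 1) (by omega)
      push_cast at this
      convert this using 3 <;> ring
    have eqA : ((t:ℝ) + 1 - a) / (((n:ℝ) + 1) + 1 - a) =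
        (((t:ℝ) + 1 - a) / ((n:ℝ) + 1 - a)) * (((n:ℝ) + 1 - a) / ((n:ℝ) + 2 - a)) := by
      rw [div_mul_div_cancel₀ h1.ne']
      congr 1
      ring
    push_cast
    rw [eqA, Real.mul_rpow (by positivity) (by positivity)]
    have hXnn : (0:ℝ) ≤ (((n:ℝ) + 1 - a) / ((n:ℝ) + 2 - a)) ^ e := by positivity
    have hPnn : (0:ℝ) ≤ ∏ i ∈ Finset.Icc (t + 1) n, q i :=
      le_trans (by positivity) ih
    calc (((t:ℝ) + 1 - a) / ((n:ℝ) + 1 - a)) ^ e * (((n:ℝ) + 1 - a) / ((n:ℝ) + 2 - a)) ^ e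
        ≤ (∏ i ∈ Finset.Icc (t + 1) n, q i) * q (n + 1) :=
          mul_le_mul ih hq1 hXnn hPnn
      _ = q (n + 1) * ∏ i ∈ Finset.Icc (t + 1) n, q i := mul_comm _ _

theorem stmt_3 (B η ρ : ℝ) (hB : 1 ≤ B) (hη0 : 0 ≤ η) (hη1 : η ≤ 1) (hρ : 1 ≤ ρ)
    (q : ℤ → ℝ)
    (hq : ∀ i : ℤ, q i = 1 - (1 + (B - 1) * η) / (B * i / 2 - (B - 1) * (ρ + 1 - η)))
    (t n : ℤ) (ht : 2 * ρ + 2 ≤ (t : ℝ)) (htn : t ≤ n) :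
    (∏ i ∈ Finset.Icc (t + 1) n, q i) ≥
      (((t : ℝ) - 2 * ρ - 2) / (n : ℝ)) ^ (2 * (η + (1 - η) / B)) := by
  have hB0 : (0:ℝ) < B := lt_of_lt_of_le one_pos hB
  set e : ℝ := 2 * (η + (1 - η) / B) with he_def
  set c : ℝ := (2 * (B - 1) * (ρ + 1) + 2) / B with hc_def
  have he0 : 0 < e := by
    have : (1:ℝ)/B ≤ η + (1 - η)/B := by
      rw [div_le_iff₀ hB0] at *
      have : η * B ≥ η := by nlinarith
      rw [add_mul, div_mul_cancel₀ _ (ne_of_gt hB0)]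
      nlinarith
    have hBi : (0:ℝ) < 1/B := by positivity
    nlinarith
  have he2 : e ≤ 2 := by
    have : (1 - η)/B ≤ 1 - η := by
      rw [div_le_iff₀ hB0]; nlinarith
    rw [he_def]; nlinarith
  have hc2 : 2 ≤ c := by
    rw [hc_def, le_div_iff₀ hB0]; nlinarith
  have hcρ : c ≤ 2 * ρ + 2 := by
    rw [hc_def, div_le_iff₀ hB0]; nlinarith
  have htc : c ≤ (t:ℝ) := by linarith
  have htn' : (t:ℝ) ≤ (n:ℝ) := by exact_mod_cast htn
  have hn0 : (0:ℝ) < (n:ℝ) := by linarith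
  -- rewrite q
  have hqf : ∀ i : ℤ, t + 1 ≤ i → q i = ((i:ℝ) - c) / ((i:ℝ) - c + e) := by
    intro i hi
    have hi' : (t:ℝ) + 1 ≤ (i:ℝ) := by exact_mod_cast hi
    have hx : (0:ℝ) < (i:ℝ) - c := by linarith
    have hxe : (0:ℝ) < (i:ℝ) - c + e := by linarith
    have hd : B * (i:ℝ) / 2 - (B - 1) * (ρ + 1 - η) = B / 2 * ((i:ℝ) - c + e) := by
      rw [hc_def, he_def]; field_simp; ring
    have hα : 1 + (B - 1) * η = B / 2 * e := by
      rw [he_def]; field_simp; ring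
    rw [hq i, hd, hα, mul_div_mul_left _ _ (by positivity : B / 2 ≠ 0)]
    field_simp; ring
  rcases le_total e 1 with hle | hge
  · -- e ≤ 1, use a = c + 1 - e
    set a : ℝ := c + 1 - e with ha_def
    have hta : (0:ℝ) < (t:ℝ) + 1 - a := by rw [ha_def]; linarith
    have hterm : ∀ i : ℤ, t + 1 ≤ i →
        (((i:ℝ) - a) / ((i:ℝ) + 1 - a)) ^ e ≤ q i := by
      intro i hi
      have hi' : (t:ℝ) + 1 ≤ (i:ℝ) := by exact_mod_cast hi
      have hx1 : (1:ℝ) ≤ (i:ℝ) - c := by linarith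
      rw [hqf i hi]
      have := aux_bern_le_one ((i:ℝ) - c) e hx1 he0.le hle
      convert this using 3 <;> (rw [ha_def]; ring)
    have key := aux_telescope q e a he0.le t hta hterm n htn
    refine le_trans ?_ key
    apply Real.rpow_le_rpow (div_nonneg (by linarith) hn0.le) ?_ he0.le
    have hnum : (t:ℝ) - 2 * ρ - 2 ≤ (t:ℝ) + 1 - a := by rw [ha_def]; linarith
    have hden : (0:ℝ) < (n:ℝ) + 1 - a := by rw [ha_def]; linarith
    have hden' : (n:ℝ) + 1 - a ≤ (n:ℝ) := by rw [ha_def]; linarith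
    exact div_le_div₀ (by linarith) hnum hden hden'
  · -- 1 ≤ e, use a = c
    set a : ℝ := c with ha_def
    have hta : (0:ℝ) < (t:ℝ) + 1 - a := by rw [ha_def]; linarith
    have hterm : ∀ i : ℤ, t + 1 ≤ i →
        (((i:ℝ) - a) / ((i:ℝ) + 1 - a)) ^ e ≤ q i := by
      intro i hi
      have hi' : (t:ℝ) + 1 ≤ (i:ℝ) := by exact_mod_cast hi
      have hx : (0:ℝ) < (i:ℝ) - c := by linarith
      rw [hqf i hi]
      have := aux_bern_ge_one ((i:ℝ) - c) e hx hge
      convert this using 3 <;> (rw [ha_def]; ring)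
    have key := aux_telescope q e a he0.le t hta hterm n htn
    refine le_trans ?_ key
    apply Real.rpow_le_rpow (div_nonneg (by linarith) hn0.le) ?_ he0.le
    have hnum : (t:ℝ) - 2 * ρ - 2 ≤ (t:ℝ) + 1 - a := by rw [ha_def]; linarith
    have hden : (0:ℝ) < (n:ℝ) + 1 - a := by rw [ha_def]; linarith
    have hden' : (n:ℝ) + 1 - a ≤ (n:ℝ) := by rw [ha_def]; linarith
    exact div_le_div₀ (by linarith) hnum hden hden'
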